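/- Fine's theorem for the two-setting two-outcome Bell scenario: let P(a,b|x,y) for a,b,x,y ∈ {0,1} be a family of probability distributions (i.e., P(·,·|x,y) is a probability distribution on {0,1}^2 for each (x,y)). Then the following are equivalent: (1) there exist a finite set Λ, a probability distribution μ on Λ, and response functions p_A : {0,1}×{0,1}×Λ → [0,1], p_B : {0,1}×{0,1}×Λ → [0,1] with Σ_a p_A(a|x,λ)=1 and Σ_b p_B(b|y,λ)=1 for all x,y,λ, such that P(a,b|x,y) = Σ_{λ∈Λ} μ(λ)·p_A(a|x,λ)·p_B(b|y,λ) for all a,b,x,y; (2) there exists a probability distribution q on {0,1}^4 with coordinates (a₀,a₁,b₀,b₁) such that for all x,y ∈ {0,1} and all a,b ∈ {0,1}, P(a,b|x,y) equals the marginal probability q(a_x = a, b_y = b). -/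

import Mathlib

lemma fine_m00 (a b : Fin 2) (f : Fin 2 → Fin 2 → Fin 2 → Fin 2 → ℝ) :
    ∑ a₀ : Fin 2, ∑ a₁ : Fin 2, ∑ b₀ : Fin 2, ∑ b₁ : Fin 2,
      (if a₀ = a ∧ b₀ = b then f a₀ a₁ b₀ b₁ else 0)
    = ∑ a₁ : Fin 2, ∑ b₁ : Fin 2, f a a₁ b b₁ := by
  fin_cases a <;> fin_cases b <;> simp [Fin.sum_univ_two]

lemma fine_m01 (a b : Fin 2) (f : Fin 2 → Fin 2 → Fin 2 → Fin 2 → ℝ) :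
    ∑ a₀ : Fin 2, ∑ a₁ : Fin 2, ∑ b₀ : Fin 2, ∑ b₁ : Fin 2,
      (if a₀ = a ∧ b₁ = b then f a₀ a₁ b₀ b₁ else 0)
    = ∑ a₁ : Fin 2, ∑ b₀ : Fin 2, f a a₁ b₀ b := by
  fin_cases a <;> fin_cases b <;> simp [Fin.sum_univ_two]

lemma fine_m10 (a b : Fin 2) (f : Fin 2 → Fin 2 → Fin 2 → Fin 2 → ℝ) :
    ∑ a₀ : Fin 2, ∑ a₁ : Fin 2, ∑ b₀ : Fin 2, ∑ b₁ : Fin 2,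
      (if a₁ = a ∧ b₀ = b then f a₀ a₁ b₀ b₁ else 0)
    = ∑ a₀ : Fin 2, ∑ b₁ : Fin 2, f a₀ a b b₁ := by
  fin_cases a <;> fin_cases b <;> simp [Fin.sum_univ_two]

lemma fine_m11 (a b : Fin 2) (f : Fin 2 → Fin 2 → Fin 2 → Fin 2 → ℝ) :
    ∑ a₀ : Fin 2, ∑ a₁ : Fin 2, ∑ b₀ : Fin 2, ∑ b₁ : Fin 2,
      (if a₁ = a ∧ b₁ = b then f a₀ a₁ b₀ b₁ else 0)
    = ∑ a₀ : Fin 2, ∑ b₀ : Fin 2, f a₀ a b₀ b := by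
  fin_cases a <;> fin_cases b <;> simp [Fin.sum_univ_two]

def fineDec (l : Fin 16) : Fin 2 × Fin 2 × Fin 2 × Fin 2 :=
  (⟨l.val % 2, by omega⟩, ⟨l.val / 2 % 2, by omega⟩,
   ⟨l.val / 4 % 2, by omega⟩, ⟨l.val / 8 % 2, by omega⟩)

def fineEnc (p : Fin 2 × Fin 2 × Fin 2 × Fin 2) : Fin 16 :=
  ⟨p.1.val + 2 * p.2.1.val + 4 * p.2.2.1.val + 8 * p.2.2.2.val, by omega⟩

def fineE : Fin 16 ≃ (Fin 2 × Fin 2 × Fin 2 × Fin 2) :=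
  ⟨fineDec, fineEnc, by decide, by decide⟩

lemma fine_ite2 (v : Fin 2) :
    (if v = 0 then (1:ℝ) else 0) + (if v = 1 then (1:ℝ) else 0) = 1 := by
  fin_cases v <;> simp

/-- Fine's theorem for the two-setting two-outcome Bell scenario: a family of
correlations `P a b x y` admits a locally causal (local hidden variable) model
iff there is a joint distribution `q` on `{0,1}^4` with coordinates
`(a₀, a₁, b₀, b₁)` whose marginals `q(a_x = a, b_y = b)` reproduce `P`. -/
theorem fine_theorem
    (P : Fin 2 → Fin 2 → Fin 2 → Fin 2 → ℝ)  -- `P a b x y` = P(a,b|x,y)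
    (hP0 : ∀ a b x y, 0 ≤ P a b x y)
    (hP1 : ∀ x y, ∑ a : Fin 2, ∑ b : Fin 2, P a b x y = 1) :
    (∃ (n : ℕ) (μ : Fin n → ℝ) (pA pB : Fin 2 → Fin 2 → Fin n → ℝ),
        (∀ l, 0 ≤ μ l) ∧ (∑ l : Fin n, μ l) = 1 ∧
        (∀ a x l, 0 ≤ pA a x l ∧ pA a x l ≤ 1) ∧
        (∀ b y l, 0 ≤ pB b y l ∧ pB b y l ≤ 1) ∧
        (∀ x l, ∑ a : Fin 2, pA a x l = 1) ∧
        (∀ y l, ∑ b : Fin 2, pB b y l = 1) ∧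
        (∀ a b x y, P a b x y = ∑ l : Fin n, μ l * pA a x l * pB b y l))
    ↔
    (∃ q : Fin 2 → Fin 2 → Fin 2 → Fin 2 → ℝ,  -- `q a₀ a₁ b₀ b₁`
        (∀ a₀ a₁ b₀ b₁, 0 ≤ q a₀ a₁ b₀ b₁) ∧
        (∑ a₀ : Fin 2, ∑ a₁ : Fin 2, ∑ b₀ : Fin 2, ∑ b₁ : Fin 2, q a₀ a₁ b₀ b₁) = 1 ∧
        (∀ x y a b, P a b x y =
          ∑ a₀ : Fin 2, ∑ a₁ : Fin 2, ∑ b₀ : Fin 2, ∑ b₁ : Fin 2,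
            if ![a₀, a₁] x = a ∧ ![b₀, b₁] y = b then q a₀ a₁ b₀ b₁ else 0)) := by
  constructor
  · rintro ⟨n, μ, pA, pB, hμ0, hμ1, hAb, hBb, hA, hB, hP⟩
    have hA' : ∀ x l, pA 0 x l + pA 1 x l = 1 := fun x l => by
      simpa [Fin.sum_univ_two] using hA x l
    have hB' : ∀ y l, pB 0 y l + pB 1 y l = 1 := fun y l => by
      simpa [Fin.sum_univ_two] using hB y l
    refine ⟨fun a₀ a₁ b₀ b₁ => ∑ l : Fin n,
        μ l * (pA a₀ 0 l * pA a₁ 1 l * (pB b₀ 0 l * pB b₁ 1 l)), ?_, ?_, ?_⟩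
    · intro a₀ a₁ b₀ b₁
      refine Finset.sum_nonneg fun l _ => ?_
      have := hμ0 l
      have h1 := (hAb a₀ 0 l).1; have h2 := (hAb a₁ 1 l).1
      have h3 := (hBb b₀ 0 l).1; have h4 := (hBb b₁ 1 l).1
      positivity
    · simp only [Fin.sum_univ_two, ← Finset.sum_add_distrib]
      rw [← hμ1]
      refine Finset.sum_congr rfl fun l _ => ?_
      linear_combination (μ l * (pA 0 1 l + pA 1 1 l) * (pB 0 0 l + pB 1 0 l) *
            (pB 0 1 l + pB 1 1 l)) * hA' 0 l
        + (μ l * (pB 0 0 l + pB 1 0 l) * (pB 0 1 l + pB 1 1 l)) * hA' 1 l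
        + (μ l * (pB 0 1 l + pB 1 1 l)) * hB' 0 l
        + μ l * hB' 1 l
    · intro x y a b
      fin_cases x <;> fin_cases y <;>
        simp only [Fin.mk_zero, Fin.mk_one, Matrix.cons_val_zero, Matrix.cons_val_one, Matrix.head_cons]
      · erw [fine_m00]
        simp only [Fin.sum_univ_two, ← Finset.sum_add_distrib]
        rw [hP a b 0 0]
        refine Finset.sum_congr rfl fun l _ => ?_
        linear_combination -(μ l * pA a 0 l * pB b 0 l * (pB 0 1 l + pB 1 1 l)) * hA' 1 l
          - (μ l * pA a 0 l * pB b 0 l) * hB' 1 l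
      · erw [fine_m01]
        simp only [Fin.sum_univ_two, ← Finset.sum_add_distrib]
        rw [hP a b 0 1]
        refine Finset.sum_congr rfl fun l _ => ?_
        linear_combination -(μ l * pA a 0 l * pB b 1 l * (pB 0 0 l + pB 1 0 l)) * hA' 1 l
          - (μ l * pA a 0 l * pB b 1 l) * hB' 0 l
      · erw [fine_m10]
        simp only [Fin.sum_univ_two, ← Finset.sum_add_distrib]
        rw [hP a b 1 0]
        refine Finset.sum_congr rfl fun l _ => ?_
        linear_combination -(μ l * pA a 1 l * pB b 0 l * (pB 0 1 l + pB 1 1 l)) * hA' 0 l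
          - (μ l * pA a 1 l * pB b 0 l) * hB' 1 l
      · erw [fine_m11]
        simp only [Fin.sum_univ_two, ← Finset.sum_add_distrib]
        rw [hP a b 1 1]
        refine Finset.sum_congr rfl fun l _ => ?_
        linear_combination -(μ l * pA a 1 l * pB b 1 l * (pB 0 0 l + pB 1 0 l)) * hA' 0 l
          - (μ l * pA a 1 l * pB b 1 l) * hB' 0 l
  · rintro ⟨q, hq0, hq1, hq⟩
    refine ⟨16,
      fun l => q (fineE l).1 (fineE l).2.1 (fineE l).2.2.1 (fineE l).2.2.2,
      fun a x l => if ![(fineE l).1, (fineE l).2.1] x = a then 1 else 0,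
      fun b y l => if ![(fineE l).2.2.1, (fineE l).2.2.2] y = b then 1 else 0,
      fun l => hq0 _ _ _ _, ?_, ?_, ?_, ?_, ?_, ?_⟩
    · rw [Equiv.sum_comp fineE (fun p => q p.1 p.2.1 p.2.2.1 p.2.2.2)]
      simpa [Fintype.sum_prod_type] using hq1
    · intro a x l; dsimp only; split <;> norm_num
    · intro b y l; dsimp only; split <;> norm_num
    · intro x l
      rw [Fin.sum_univ_two]
      exact fine_ite2 _
    · intro y l
      rw [Fin.sum_univ_two]
      exact fine_ite2 _
    · intro a b x y
      rw [hq x y a b]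
      rw [Equiv.sum_comp fineE (fun p =>
        q p.1 p.2.1 p.2.2.1 p.2.2.2 * (if ![p.1, p.2.1] x = a then (1:ℝ) else 0)
          * (if ![p.2.2.1, p.2.2.2] y = b then (1:ℝ) else 0))]
      simp only [Fintype.sum_prod_type]
      refine Finset.sum_congr rfl fun a₀ _ => Finset.sum_congr rfl fun a₁ _ =>
        Finset.sum_congr rfl fun b₀ _ => Finset.sum_congr rfl fun b₁ _ => ?_
      by_cases h1 : ![a₀, a₁] x = a <;> by_cases h2 : ![b₀, b₁] y = b <;>
        simp [h1, h2]
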